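/- Let n ≥ 2 be an integer, let λ_1 > λ_2 > ... > λ_n > 0 be real numbers, and let α_1, ..., α_n be real numbers with α_k ≠ α_n for every k = 1, ..., n−1. Then (∏_{l=1}^n λ_l^{α_n}) · ∫_R ∏_{l=1}^{n−1} μ_l^{−α_n−1} · det[μ_j^{α_k}]_{j,k=1,...,n−1} dμ_1⋯dμ_{n−1} = (∏_{k=1}^{n−1} 1/(α_k − α_n)) · det[λ_j^{α_k}]_{j,k=1,...,n}, where R = {(μ_1,...,μ_{n−1}) ∈ ℝ^{n−1} : λ_{j+1} ≤ μ_j ≤ λ_j for every j = 1,...,n−1} (the interlacing region λ_1 ≥ μ_1 ≥ λ_2 ≥ μ_2 ≥ ⋯ ≥ λ_n). -/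

import Mathlib

open MeasureTheory


/-- Box integral of a product of one-variable functions. -/
lemma box_integral {N : ℕ} (s : Fin N → Set ℝ) (hs : ∀ j, MeasurableSet (s j))
    (f : Fin N → ℝ → ℝ) :
    ∫ x in Set.univ.pi s, ∏ j, f j (x j) = ∏ j, ∫ t in s j, f j t := by
  rw [← integral_indicator (MeasurableSet.univ_pi hs)]
  have h : (Set.univ.pi s).indicator (fun x => ∏ j, f j (x j))
      = fun x => ∏ j, (s j).indicator (f j) (x j) := by
    funext x
    by_cases hx : x ∈ Set.univ.pi s
    · rw [Set.indicator_of_mem hx]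
      exact Finset.prod_congr rfl fun j _ =>
        (Set.indicator_of_mem (hx j (Set.mem_univ j)) _).symm
    · rw [Set.indicator_of_notMem hx]
      rw [Set.mem_univ_pi] at hx
      push_neg at hx
      obtain ⟨j, hj⟩ := hx
      exact (Finset.prod_eq_zero (Finset.mem_univ j) (Set.indicator_of_notMem hj _)).symm
  rw [h, MeasureTheory.integral_fintype_prod_volume_eq_prod]
  exact Finset.prod_congr rfl fun j _ => integral_indicator (hs j)

/-- Telescoping sum over `Finset.Ici`. -/
lemma tele {N : ℕ} (f : Fin (N + 1) → ℝ) (j : Fin (N + 1)) :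
    ∑ i ∈ Finset.Ici j,
      (if h : (i : ℕ) < N then f i - f (Fin.succ ⟨i, h⟩) else f i) = f j := by
  induction j using Fin.reverseInduction with
  | last =>
    have : Finset.Ici (Fin.last N) = {Fin.last N} := by
      ext x
      simp [Finset.mem_Ici, Fin.last_le_iff, eq_comm]
    rw [this, Finset.sum_singleton, dif_neg (by simp)]
  | cast i ih =>
    have hins : Finset.Ici i.castSucc = insert i.castSucc (Finset.Ici i.succ) := by
      ext x
      simp only [Finset.mem_Ici, Finset.mem_insert]
      constructor
      · intro hx
        rcases eq_or_lt_of_le hx with h | h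
        · exact Or.inl h.symm
        · right
          rw [Fin.le_def]
          rw [Fin.lt_def] at h
          simpa using h
      · rintro (rfl | hx)
        · exact le_refl _
        · exact le_trans (Fin.castSucc_lt_succ : i.castSucc < i.succ).le hx
    rw [hins, Finset.sum_insert (by simp [Finset.mem_Ici, Fin.lt_def] ), ih]
    have hval : ((i.castSucc : Fin (N+1)) : ℕ) < N := by simp [i.isLt]
    rw [dif_pos hval]
    have heq : Fin.succ ⟨(i.castSucc : ℕ), hval⟩ = i.succ :=
      congrArg Fin.succ (Fin.ext (by simp))
    rw [heq]
    ring

/-- Determinant with last column of ones equals determinant of row differences. -/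
lemma detB_eq {N : ℕ} (B : Matrix (Fin (N + 1)) (Fin (N + 1)) ℝ)
    (hB : ∀ j, B j (Fin.last N) = 1) :
    B.det = (Matrix.of fun j k : Fin N => B j.castSucc k.castSucc - B j.succ k.castSucc).det := by
  classical
  set C : Matrix (Fin (N + 1)) (Fin (N + 1)) ℝ :=
    Matrix.of fun i k => if h : (i : ℕ) < N then B i k - B (Fin.succ ⟨i, h⟩) k else B i k with hC
  set T : Matrix (Fin (N + 1)) (Fin (N + 1)) ℝ :=
    Matrix.of fun i k => if i ≤ k then (1 : ℝ) else 0 with hT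
  have hBTC : B = T * C := by
    ext j k
    rw [Matrix.mul_apply]
    have : ∀ i, T j i * C i k = if i ∈ Finset.Ici j then C i k else 0 := by
      intro i
      simp only [hT, Matrix.of_apply, Finset.mem_Ici]
      split <;> simp
    rw [Finset.sum_congr rfl fun i _ => this i, Finset.sum_ite_mem,
      Finset.univ_inter]
    exact (tele (fun i => B i k) j).symm
  have hTdet : T.det = 1 := by
    rw [Matrix.det_of_upperTriangular]
    · simp [hT]
    · intro i j hij
      simp only [hT, Matrix.of_apply]
      exact if_neg (not_le.mpr hij)
  have hCdet : C.det =
      (Matrix.of fun j k : Fin N => B j.castSucc k.castSucc - B j.succ k.castSucc).det := by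
    have he := Matrix.det_submatrix_equiv_self (finSumFinEquiv (m := N) (n := 1)) C
    rw [← he]
    have hsub : C.submatrix (finSumFinEquiv (m := N) (n := 1)) (finSumFinEquiv (m := N) (n := 1))
        = Matrix.fromBlocks
            (Matrix.of fun j k : Fin N => B j.castSucc k.castSucc - B j.succ k.castSucc) 0
            (Matrix.of fun (_ : Fin 1) (k : Fin N) => C (Fin.last N) k.castSucc)
            (Matrix.of fun (_ _ : Fin 1) => (1 : ℝ)) := by
      ext i k
      have hlast : ∀ i : Fin 1, finSumFinEquiv (m := N) (n := 1) (Sum.inr i) = Fin.last N := by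
        intro i
        apply Fin.ext
        simp [Fin.ext_iff, Fin.last]
      have hcast : ∀ i : Fin N, finSumFinEquiv (m := N) (n := 1) (Sum.inl i) = i.castSucc := by
        intro i; apply Fin.ext; simp
      match i, k with
      | Sum.inl i, Sum.inl k =>
        have hv : ((i.castSucc : Fin (N+1)) : ℕ) < N := by simp [i.isLt]
        simp only [Matrix.submatrix_apply, hcast, Matrix.fromBlocks_apply₁₁, hC,
          Matrix.of_apply, dif_pos hv]
        have hi : (⟨((i.castSucc : Fin (N+1)) : ℕ), hv⟩ : Fin N) = i := Fin.ext (by simp)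
        rw [hi]
      | Sum.inl i, Sum.inr k =>
        have hv : ((i.castSucc : Fin (N+1)) : ℕ) < N := by simp [i.isLt]
        simp only [Matrix.submatrix_apply, hcast, hlast, Matrix.fromBlocks_apply₁₂, hC,
          Matrix.of_apply, dif_pos hv, Matrix.zero_apply]
        rw [hB, hB]
        ring
      | Sum.inr i, Sum.inl k =>
        simp only [Matrix.submatrix_apply, hcast, hlast, Matrix.fromBlocks_apply₂₁,
          Matrix.of_apply]
      | Sum.inr i, Sum.inr k =>
        simp only [Matrix.submatrix_apply, hlast, Matrix.fromBlocks_apply₂₂, hC,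
          Matrix.of_apply, Matrix.of_apply]
        rw [dif_neg (by simp), hB]
    rw [hsub, Matrix.det_fromBlocks_zero₁₂]
    have : (Matrix.of fun (_ _ : Fin 1) => (1 : ℝ)).det = 1 := by
      rw [Matrix.det_fin_one]; rfl
    rw [this, mul_one]
  have hfin : B.det = C.det := by rw [hBTC, Matrix.det_mul, hTdet, one_mul]
  rw [hfin, hCdet]

/-- the multiple integral evaluation of Lemma L1 (interlacing integral). -/
theorem stmt_0 (N : ℕ) (hN : 1 ≤ N) (lam : Fin (N + 1) → ℝ) (α : Fin (N + 1) → ℝ)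
    (hanti : ∀ i j : Fin (N + 1), i < j → lam j < lam i) (hpos : ∀ i, 0 < lam i)
    (hα : ∀ k : Fin N, α k.castSucc ≠ α (Fin.last N)) :
    (∏ l, lam l ^ α (Fin.last N)) *
      ∫ mu in {mu : Fin N → ℝ | ∀ j : Fin N, lam j.succ ≤ mu j ∧ mu j ≤ lam j.castSucc},
        (∏ l, mu l ^ (-(α (Fin.last N)) - 1)) *
          (Matrix.of fun j k : Fin N => mu j ^ α k.castSucc).det
    = (∏ k : Fin N, (α k.castSucc - α (Fin.last N))⁻¹) *
        (Matrix.of fun j k : Fin (N + 1) => lam j ^ α k).det := by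
  classical
  set αL := α (Fin.last N) with hαL
  set γ : Fin N → ℝ := fun k => α k.castSucc - αL with hγdef
  have hγ : ∀ k, γ k ≠ 0 := fun k => sub_ne_zero.mpr (hα k)
  have hab : ∀ j : Fin N, lam j.succ ≤ lam j.castSucc :=
    fun j => (hanti _ _ (Fin.castSucc_lt_succ : j.castSucc < j.succ)).le
  set S : Set (Fin N → ℝ) := Set.univ.pi fun j => Set.Icc (lam j.succ) (lam j.castSucc) with hSdef
  have hSet : {mu : Fin N → ℝ | ∀ j : Fin N, lam j.succ ≤ mu j ∧ mu j ≤ lam j.castSucc} = S := by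
    ext mu
    simp only [hSdef, Set.mem_setOf_eq, Set.mem_pi, Set.mem_univ, Set.mem_Icc,
      forall_true_left, true_implies]
  have hmeas : MeasurableSet S := MeasurableSet.univ_pi fun j => measurableSet_Icc
  have hcomp : IsCompact S := isCompact_univ_pi fun j => isCompact_Icc
  set G : Matrix (Fin N) (Fin N) ℝ :=
    Matrix.of fun j k => (lam j.castSucc ^ γ k - lam j.succ ^ γ k) / γ k with hGdef
  -- Step 1: rewrite the integrand on S
  have hcongr : Set.EqOn
      (fun mu : Fin N → ℝ => (∏ l, mu l ^ (-αL - 1)) *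
          (Matrix.of fun j k : Fin N => mu j ^ α k.castSucc).det)
      (fun mu : Fin N → ℝ => ∑ σ : Equiv.Perm (Fin N),
          ((Equiv.Perm.sign σ : ℤ) : ℝ) * ∏ j, mu j ^ (γ (σ⁻¹ j) - 1)) S := by
    intro mu hmu
    have hmupos : ∀ j, 0 < mu j := fun j =>
      lt_of_lt_of_le (hpos j.succ) (hmu j (Set.mem_univ j)).1
    simp only
    rw [← Matrix.det_mul_column (fun l => mu l ^ (-αL - 1))
        (Matrix.of fun j k : Fin N => mu j ^ α k.castSucc)]
    have hmat : (Matrix.of fun i j : Fin N =>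
          mu i ^ (-αL - 1) * (Matrix.of fun j k : Fin N => mu j ^ α k.castSucc) i j)
        = Matrix.of fun j k : Fin N => mu j ^ (γ k - 1) := by
      ext j k
      rw [Matrix.of_apply, Matrix.of_apply, ← Real.rpow_add (hmupos j)]
      congr 1
      simp [hγdef]; ring
    rw [hmat, Matrix.det_apply']
    refine Finset.sum_congr rfl fun σ _ => ?_
    congr 1
    rw [← Equiv.prod_comp σ (fun j => mu j ^ (γ (σ⁻¹ j) - 1))]
    refine Finset.prod_congr rfl fun j _ => ?_
    simp
  rw [hSet, setIntegral_congr_fun hmeas hcongr]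
  -- Step 2: integrability of each permutation term
  have hint : ∀ σ : Equiv.Perm (Fin N),
      IntegrableOn (fun mu : Fin N → ℝ =>
        ((Equiv.Perm.sign σ : ℤ) : ℝ) * ∏ j, mu j ^ (γ (σ⁻¹ j) - 1)) S := by
    intro σ
    apply ContinuousOn.integrableOn_compact hcomp
    apply ContinuousOn.mul continuousOn_const
    apply continuousOn_finset_prod
    intro j _
    apply ContinuousOn.rpow_const (continuous_apply j).continuousOn
    intro mu hmu
    exact Or.inl (ne_of_gt (lt_of_lt_of_le (hpos j.succ) (hmu j (Set.mem_univ j)).1))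
  rw [integral_finset_sum _ fun σ _ => hint σ]
  -- Step 3: evaluate each term
  have hIcc : ∀ (j k : Fin N),
      (∫ t in Set.Icc (lam j.succ) (lam j.castSucc), t ^ (γ k - 1)) = G j k := by
    intro j k
    rw [MeasureTheory.integral_Icc_eq_integral_Ioc,
      ← intervalIntegral.integral_of_le (hab j), integral_rpow]
    · have h1 : γ k - 1 + 1 = γ k := by ring
      rw [h1, hGdef]
      rfl
    · right
      constructor
      · intro h
        apply hγ k
        have : γ k = 0 := by linarith [sub_eq_iff_eq_add.mp h]
        exact this
      · intro hmem
        rw [Set.uIcc_of_le (hab j)] at hmem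
        exact absurd hmem.1 (not_le.mpr (hpos j.succ))
  have hterm : ∀ σ : Equiv.Perm (Fin N),
      (∫ mu in S, ((Equiv.Perm.sign σ : ℤ) : ℝ) * ∏ j, mu j ^ (γ (σ⁻¹ j) - 1))
        = ((Equiv.Perm.sign σ : ℤ) : ℝ) * ∏ j, G j (σ⁻¹ j) := by
    intro σ
    rw [MeasureTheory.integral_const_mul, hSdef,
      box_integral _ (fun j => measurableSet_Icc) (fun j t => t ^ (γ (σ⁻¹ j) - 1))]
    congr 1
    exact Finset.prod_congr rfl fun j _ => hIcc j (σ⁻¹ j)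
  rw [Finset.sum_congr rfl fun σ _ => hterm σ]
  -- Step 4: the sum is det G
  have hdetG : ∑ σ : Equiv.Perm (Fin N),
      ((Equiv.Perm.sign σ : ℤ) : ℝ) * ∏ j, G j (σ⁻¹ j) = G.det := by
    rw [← Matrix.det_transpose G, Matrix.det_apply']
    refine Fintype.sum_equiv (Equiv.inv (Equiv.Perm (Fin N))) _ _ fun σ => ?_
    simp [Matrix.transpose_apply]
  rw [hdetG]
  -- Step 5: algebra with determinants
  set D : Matrix (Fin N) (Fin N) ℝ :=
    Matrix.of fun j k => lam j.castSucc ^ γ k - lam j.succ ^ γ k with hDdef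
  have hGD : G.det = (∏ k, (γ k)⁻¹) * D.det := by
    have : G = Matrix.of fun j k => (γ k)⁻¹ * D j k := by
      ext j k
      simp [hGdef, hDdef, div_eq_inv_mul]
    rw [this, Matrix.det_mul_row]
  have hRHS : (Matrix.of fun j k : Fin (N + 1) => lam j ^ α k).det
      = (∏ j, lam j ^ αL) * D.det := by
    have h1 : (Matrix.of fun j k : Fin (N + 1) => lam j ^ α k)
        = Matrix.of fun j k : Fin (N + 1) => lam j ^ αL * lam j ^ (α k - αL) := by
      ext j k
      rw [Matrix.of_apply, Matrix.of_apply, ← Real.rpow_add (hpos j)]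
      congr 1; ring
    rw [h1]
    refine (Matrix.det_mul_column (fun j => lam j ^ αL)
      (Matrix.of fun j k : Fin (N + 1) => lam j ^ (α k - αL))).trans ?_
    congr 1
    have h2 := detB_eq (Matrix.of fun j k : Fin (N + 1) => lam j ^ (α k - αL))
      (fun j => by simp [hαL])
    have h3 : (Matrix.of fun j k : Fin N =>
          (Matrix.of fun (j : Fin (N+1)) k => lam j ^ (α k - αL)) j.castSucc k.castSucc -
            (Matrix.of fun (j : Fin (N+1)) k => lam j ^ (α k - αL)) j.succ k.castSucc) = D := by
      ext j k
      simp [hDdef, hγdef]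
    exact h2.trans (congrArg Matrix.det h3)
  rw [hRHS, hGD]
  ring
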